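/- Let n be a natural number, let b : ℕ → ℝ be strictly positive, let θ : ℕ → ℝ, and for l ≤ r set S(l, r) = ∑_{j=l}^{r−1} b(j). Define vectors w(s, x) ∈ ℂ^{2^s} for 0 ≤ s and x ≥ 0 recursively by: w(0, x) = 1 ∈ ℂ^{2^0} = ℂ, and w(s+1, x) = √γ · e_0 ⊗ w(s, 2x) + exp(iβ/2)·√(1−γ) · e_1 ⊗ w(s, 2x+1), where u = x·2^{s+1}, v = (x+1)·2^{s+1}, m = u + 2^s, γ = S(u, m)/S(u, v), and β = θ(m) − θ(u). Then for all s and x, the t-th component of w(s, x) (for 0 ≤ t < 2^s, indexing bitstrings most significant bit first) equals exp(i(θ(u+t) − θ(u))/2)·√(b(u+t)/S(u, v)) with u = x·2^s and v = (x+1)·2^s. In particular, w(n, 0) is the quantum state preparation target state ∑_{j=0}^{2^n−1} exp(i(θ(j) − θ(0))/2)·√(b(j)/S(0, 2^n))·e_j. -/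

import Mathlib

open scoped BigOperators

/-- `Ssum b l r = ∑_{j=l}^{r-1} b j`. -/
noncomputable def Ssum (b : ℕ → ℝ) (l r : ℕ) : ℝ := ∑ j ∈ Finset.Ico l r, b j

/-- The tensor product `e_c ⊗ w ∈ ℂ^{2^(s+1)}` of a one-qubit basis vector `e_c`
(on the most significant qubit) with `w ∈ ℂ^{2^s}`, indices being bitstrings with
the most significant bit first. -/
def ebTens (s : ℕ) (c : Fin 2) (w : Fin (2^s) → ℂ) : Fin (2^(s+1)) → ℂ :=
  fun i => (if i.val / 2^s = c.val then 1 else 0) *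
    w ⟨i.val % 2^s, Nat.mod_lt _ (by positivity)⟩

/-- The recursively defined quantum state preparation vectors:
`w(0,x) = 1` and
`w(s+1,x) = √γ · e_0 ⊗ w(s,2x) + exp(iβ/2)·√(1−γ) · e_1 ⊗ w(s,2x+1)`, where
`u = x·2^{s+1}`, `v = (x+1)·2^{s+1}`, `m = u + 2^s`, `γ = S(u,m)/S(u,v)` and
`β = θ m − θ u`. -/
noncomputable def qspVec (b θ : ℕ → ℝ) : (s : ℕ) → ℕ → (Fin (2^s) → ℂ)
  | 0, _ => fun _ => 1
  | (s+1), x =>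
      let u := x * 2^(s+1)
      let v := (x+1) * 2^(s+1)
      let m := u + 2^s
      let γ := Ssum b u m / Ssum b u v
      let β := θ m - θ u
      (Real.sqrt γ : ℂ) • ebTens s 0 (qspVec b θ s (2*x)) +
        (Complex.exp (Complex.I * (β : ℂ) / 2) * (Real.sqrt (1 - γ) : ℂ)) •
          ebTens s 1 (qspVec b θ s (2*x+1))

/-- correctness of recursive quantum state preparation: for strictly
positive `b`, every `s`, `x` and every index `t < 2^s`, the `t`-th component of
`w(s,x)` equals `exp(i(θ(u+t) − θ u)/2)·√(b(u+t)/S(u,v))` where `u = x·2^s`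
and `v = (x+1)·2^s`. -/
theorem qspVec_correct (b θ : ℕ → ℝ) (hb : ∀ j, 0 < b j) (s x : ℕ) (t : Fin (2^s)) :
    qspVec b θ s x t =
      Complex.exp (Complex.I * ((θ (x * 2^s + t.val) : ℂ) - (θ (x * 2^s) : ℂ)) / 2) *
        (Real.sqrt (b (x * 2^s + t.val) / Ssum b (x * 2^s) ((x+1) * 2^s)) : ℂ) := by
  induction s generalizing x with
  | zero =>
    have ht : t.val = 0 := by omega
    simp [qspVec, Ssum, ht, Nat.Ico_succ_singleton, div_self (hb x).ne']
  | succ s ih =>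
    have h2s : (0:ℝ) < 2^s := by positivity
    have hSpos : ∀ l r : ℕ, l < r → 0 < Ssum b l r := fun l r h =>
      Finset.sum_pos (fun j _ => hb j) (by rwa [Finset.nonempty_Ico])
    set u := x * 2^(s+1) with hu
    set v := (x+1) * 2^(s+1) with hv
    set m := u + 2^s with hm
    have huv : u < v := by
      simp only [hu, hv]; have : (0:ℕ) < 2^(s+1) := by positivity
      nlinarith
    have hum : u < m := by
      have h0 : (0:ℕ) < 2^s := by positivity
      simp only [hm]; omega
    have hmv : m < v := by
      simp only [hm, hu, hv, pow_succ]; nlinarith [pow_pos (show 0 < 2 by norm_num) s]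
    have hSuv := hSpos u v huv
    have hSum := hSpos u m hum
    have hSmv := hSpos m v hmv
    have hsplit : Ssum b u v = Ssum b u m + Ssum b m v := by
      rw [Ssum, Ssum, Ssum, Finset.sum_Ico_consecutive _ hum.le hmv.le]
    have ht2 : t.val < 2 * 2^s := lt_of_lt_of_eq t.isLt (by rw [pow_succ]; ring)
    have hx1 : 2 * x * 2^s = u := by rw [hu, pow_succ]; ring
    have hx2 : (2 * x + 1) * 2^s = m := by rw [hm, hu, pow_succ]; ring
    have hx3 : (2 * x + 1 + 1) * 2^s = v := by rw [hv, pow_succ]; ring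
    simp only [qspVec, Pi.add_apply, Pi.smul_apply, smul_eq_mul, ebTens, ← hu, ← hv, ← hm]
    by_cases h : t.val < 2^s
    · have hd : t.val / 2^s = 0 := Nat.div_eq_of_lt h
      have hmod : t.val % 2^s = t.val := Nat.mod_eq_of_lt h
      rw [hd]
      simp only [Fin.val_zero, Fin.val_one, if_true, if_false, one_mul, mul_zero,
        zero_ne_one, if_false, mul_zero, add_zero]
      rw [ih (2*x) ⟨t.val % 2^s, Nat.mod_lt _ (by positivity)⟩]
      simp only [hmod, hx1, hx2]
      have key : Real.sqrt (Ssum b u m / Ssum b u v) *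
          Real.sqrt (b (u + t.val) / Ssum b u m) =
          Real.sqrt (b (u + t.val) / Ssum b u v) := by
        rw [← Real.sqrt_mul (by positivity)]
        congr 1
        field_simp
      push_cast [← key]
      ring
    · have hd : t.val / 2^s = 1 := by
        rw [Nat.div_eq_of_lt_le] <;> omega
      have hmod : t.val % 2^s = t.val - 2^s := by
        rw [Nat.mod_eq_sub_mod (by omega), Nat.mod_eq_of_lt (by omega)]
      rw [hd]
      simp only [Fin.val_zero, Fin.val_one, one_ne_zero, if_false, if_true, zero_mul,
        one_mul, zero_add]
      rw [ih (2*x+1) ⟨t.val % 2^s, Nat.mod_lt _ (by positivity)⟩]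
      simp only [hmod, hx2, hx3]
      have hidx : m + (t.val - 2^s) = u + t.val := by simp only [hm]; omega
      rw [hidx]
      have hγ : 1 - Ssum b u m / Ssum b u v = Ssum b m v / Ssum b u v := by
        field_simp
        linarith [hsplit]
      rw [hγ]
      have key : Real.sqrt (Ssum b m v / Ssum b u v) *
          Real.sqrt (b (u + t.val) / Ssum b m v) =
          Real.sqrt (b (u + t.val) / Ssum b u v) := by
        rw [← Real.sqrt_mul (by positivity)]
        congr 1
        field_simp
      have hexp : Complex.exp (Complex.I * ((θ m : ℂ) - (θ u : ℂ)) / 2) *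
          Complex.exp (Complex.I * ((θ (u + t.val) : ℂ) - (θ m : ℂ)) / 2) =
          Complex.exp (Complex.I * ((θ (u + t.val) : ℂ) - (θ u : ℂ)) / 2) := by
        rw [← Complex.exp_add]
        congr 1
        ring
      push_cast [← key, ← hexp]
      ring
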